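/- Let f be a threshold function on E_n^2 and let l : a_1x_1 + a_2x_2 = a_0 be an i-separation line of f (i.e., x ∈ M_i(f) iff a_1x_1 + a_2x_2 ≤ a_0). Then every vertex of Conv(l ∩ E_n^2) is an i-valued essential point of f with respect to the class of threshold functions on E_n^2. -/

import Mathlib

/-- The class of (1-)threshold functions on `{0,…,n-1}²`. -/
def ThresholdClass (n : ℕ) : Set ((Fin 2 → Fin n) → Bool) :=
  {f | ∃ b₁ b₂ b₀ : ℝ, ∀ x, f x = true ↔ b₁ * (x 0 : ℝ) + b₂ * (x 1 : ℝ) ≤ b₀}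

/-- `x` is an essential point of `f` with respect to the class `D`. -/
def Essential {α : Type*} (D : Set (α → Bool)) (f : α → Bool) (x : α) : Prop :=
  ∃ g ∈ D, g x ≠ f x ∧ ∀ y, y ≠ x → g y = f y

/-- The embedding of the grid into `ℝ²`. -/
def toR {n : ℕ} (x : Fin 2 → Fin n) : Fin 2 → ℝ := fun i => (x i : ℝ)

lemma toR_inj {n : ℕ} : Function.Injective (toR (n := n)) := by
  intro y z h
  funext j
  have hj := congrFun h j
  simp only [toR] at hj
  exact Fin.val_injective (by exact_mod_cast hj)

lemma exists_pos_le {α : Type*} [Fintype α] (v : α → ℝ) (P : α → Prop)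
    (h : ∀ y, P y → 0 < v y) : ∃ δ : ℝ, 0 < δ ∧ ∀ y, P y → δ ≤ v y := by
  classical
  by_cases hO : (Finset.univ.filter (fun y => P y)).Nonempty
  · refine ⟨(Finset.univ.filter (fun y => P y)).inf' hO v, ?_, ?_⟩
    · rw [Finset.lt_inf'_iff]
      intro y hy
      simp only [Finset.mem_filter, Finset.mem_univ, true_and] at hy
      exact h y hy
    · intro y hy
      exact Finset.inf'_le _ (by simp [hy])
  · exact ⟨1, one_pos, fun y hy => absurd ⟨y, by simp [hy]⟩ hO⟩

lemma exists_abs_bound {α : Type*} [Fintype α] [Nonempty α] (v : α → ℝ) :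
    ∃ M : ℝ, 0 ≤ M ∧ ∀ y, |v y| ≤ M := by
  classical
  refine ⟨Finset.univ.sup' Finset.univ_nonempty (fun y => |v y|), ?_, ?_⟩
  · obtain ⟨y0⟩ := (inferInstance : Nonempty α)
    exact le_trans (abs_nonneg (v y0)) (Finset.le_sup' (fun y => |v y|) (Finset.mem_univ y0))
  · exact fun y => Finset.le_sup' (fun y => |v y|) (Finset.mem_univ y)

/-- Key construction lemma: if `x` lies on the separating line and strictly maximizes
a linear functional `c` among grid points of the line, then `x` is essential. -/
lemma essential_aux (n : ℕ) (f : (Fin 2 → Fin n) → Bool) (i : Bool) (a₁ a₂ a₀ : ℝ)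
    (hsep : ∀ x, f x = i ↔ a₁ * (x 0 : ℝ) + a₂ * (x 1 : ℝ) ≤ a₀)
    (x : Fin 2 → Fin n) (hx : a₁ * (x 0 : ℝ) + a₂ * (x 1 : ℝ) = a₀)
    (c₁ c₂ : ℝ)
    (hmax : ∀ y : Fin 2 → Fin n, a₁ * (y 0 : ℝ) + a₂ * (y 1 : ℝ) = a₀ → y ≠ x →
      c₁ * (y 0 : ℝ) + c₂ * (y 1 : ℝ) < c₁ * (x 0 : ℝ) + c₂ * (x 1 : ℝ)) :
    Essential (ThresholdClass n) f x := by
  classical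
  obtain ⟨u, hu⟩ : ∃ u : (Fin 2 → Fin n) → ℝ,
      u = fun y => a₁ * (y 0 : ℝ) + a₂ * (y 1 : ℝ) := ⟨_, rfl⟩
  obtain ⟨c, hc⟩ : ∃ c : (Fin 2 → Fin n) → ℝ,
      c = fun y => c₁ * (y 0 : ℝ) + c₂ * (y 1 : ℝ) := ⟨_, rfl⟩
  have hux : u x = a₀ := by simp only [hu]; exact hx
  -- choose a separating level t between the line points ≠ x and x
  have : Nonempty (Fin 2 → Fin n) := ⟨x⟩
  obtain ⟨t, ht1, ht2⟩ : ∃ t : ℝ, t < c x ∧ ∀ y, u y = a₀ → y ≠ x → c y < t := by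
    obtain ⟨δ', hδ'0, hδ'⟩ := exists_pos_le (fun y => c x - c y) (fun y => u y = a₀ ∧ y ≠ x)
      (fun y hy => by
        have h' := hy.1
        simp only [hu] at h'
        have := hmax y h' hy.2
        simp only [hc]
        linarith)
    refine ⟨c x - δ' / 2, by linarith, fun y hy hyx => ?_⟩
    have := hδ' y ⟨hy, hyx⟩
    linarith
  -- minimal distance of off-line points
  obtain ⟨δ, hδ0, hδ⟩ : ∃ δ : ℝ, 0 < δ ∧ ∀ y, u y ≠ a₀ → δ ≤ |u y - a₀| :=
    exists_pos_le (fun y => |u y - a₀|) (fun y => u y ≠ a₀)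
      (fun y hy => abs_pos.mpr (sub_ne_zero.mpr hy))
  -- choose ε small
  obtain ⟨ε, hε0, hεM⟩ : ∃ ε : ℝ, 0 < ε ∧ ∀ y, ε * |c y - t| < δ := by
    obtain ⟨M, hM0, hMle⟩ := exists_abs_bound (fun y => c y - t)
    have hM1 : (0:ℝ) < M + 1 := by linarith
    refine ⟨δ / (M + 1), div_pos hδ0 hM1, fun y => ?_⟩
    have h4 : δ / (M + 1) * (M + 1) = δ := div_mul_cancel₀ _ hM1.ne'
    have h5 : 0 < δ / (M + 1) := div_pos hδ0 hM1
    nlinarith [hMle y, abs_nonneg (c y - t)]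
  obtain ⟨w, hwdef⟩ : ∃ w : (Fin 2 → Fin n) → ℝ,
      w = fun y => u y + ε * (c y - t) := ⟨_, rfl⟩
  -- the key equivalence
  have hw : ∀ y, (w y ≤ a₀ ↔ (u y ≤ a₀ ∧ y ≠ x)) := by
    intro y
    by_cases hyl : u y = a₀
    · by_cases hyx : y = x
      · constructor
        · intro h
          exfalso
          have hpos : 0 < ε * (c y - t) := mul_pos hε0 (by rw [hyx]; linarith)
          simp only [hwdef] at h
          rw [hyl] at h
          linarith
        · rintro ⟨_, h⟩; exact absurd hyx h
      · have hcy : c y < t := ht2 y hyl hyx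
        have hneg : ε * (c y - t) < 0 := mul_neg_of_pos_of_neg hε0 (by linarith)
        constructor
        · intro _; exact ⟨le_of_eq hyl, hyx⟩
        · intro _; simp only [hwdef]; rw [hyl]; linarith
    · have habs := hδ y hyl
      have hlt := hεM y
      have hb : |ε * (c y - t)| < |u y - a₀| := by
        rw [abs_mul, abs_of_pos hε0]; linarith
      have hyx : y ≠ x := fun h => hyl (by rw [h]; exact hux)
      rcases lt_or_gt_of_ne hyl with hl | hg
      · rw [abs_of_neg (by linarith : u y - a₀ < 0)] at hb
        have h2 := (abs_lt.mp hb).2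
        constructor
        · intro _; exact ⟨le_of_lt hl, hyx⟩
        · intro _; simp only [hwdef]; linarith
      · rw [abs_of_pos (by linarith : 0 < u y - a₀)] at hb
        have h2 := (abs_lt.mp hb).1
        constructor
        · intro h; exfalso; simp only [hwdef] at h; linarith
        · rintro ⟨h, _⟩; linarith
  -- w as a threshold form
  have hwform : ∀ y : Fin 2 → Fin n,
      ((a₁ + ε * c₁) * (y 0 : ℝ) + (a₂ + ε * c₂) * (y 1 : ℝ) ≤ a₀ + ε * t) ↔ w y ≤ a₀ := by
    intro y
    simp only [hwdef, hu, hc]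
    constructor <;> intro h <;> nlinarith [h]
  have hwx : ¬ (w x ≤ a₀) := fun h => ((hw x).mp h).2 rfl
  have hfx : f x = i := (hsep x).mpr (le_of_eq hx)
  cases i with
  | true =>
    refine ⟨fun y => decide ((a₁ + ε * c₁) * (y 0 : ℝ) + (a₂ + ε * c₂) * (y 1 : ℝ) ≤ a₀ + ε * t),
      ⟨a₁ + ε * c₁, a₂ + ε * c₂, a₀ + ε * t, fun y => by simp⟩, ?_, ?_⟩
    · rw [hfx]
      intro h
      rw [decide_eq_true_eq] at h
      exact hwx ((hwform x).mp h)
    · intro y hyx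
      have h1 : ((a₁ + ε * c₁) * (y 0 : ℝ) + (a₂ + ε * c₂) * (y 1 : ℝ) ≤ a₀ + ε * t) ↔
          u y ≤ a₀ := by
        rw [hwform y, hw y]
        exact ⟨fun h => h.1, fun h => ⟨h, hyx⟩⟩
      have h2 : f y = true ↔ u y ≤ a₀ := by simp only [hu]; exact hsep y
      by_cases hcase : u y ≤ a₀
      · rw [h2.mpr hcase, decide_eq_true_eq]
        exact h1.mpr hcase
      · have hfy : f y = false := by
          cases hfy : f y
          · rfl
          · exact absurd (h2.mp hfy) hcase
        rw [hfy, decide_eq_false_iff_not]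
        exact fun h => hcase (h1.mp h)
  | false =>
    -- a gap η above a₀ among w-values
    obtain ⟨η, hη0, hη'⟩ := exists_pos_le (fun y => w y - a₀) (fun y => a₀ < w y)
      (fun y hy => by linarith)
    have hη : ∀ y, a₀ < w y → a₀ + η ≤ w y := fun y hy => by
      have := hη' y hy; linarith
    have hgiff : ∀ y : Fin 2 → Fin n,
        (-(a₁ + ε * c₁) * (y 0 : ℝ) + -(a₂ + ε * c₂) * (y 1 : ℝ) ≤ -(a₀ + ε * t) - η) ↔
        a₀ < w y := by
      intro y
      have hform := hwform y
      constructor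
      · intro h
        by_contra hcon
        push_neg at hcon
        have := hform.mpr hcon
        linarith
      · intro h
        have h2 := hη y h
        have h4 : a₀ + ε * t + η ≤ (a₁ + ε * c₁) * (y 0 : ℝ) + (a₂ + ε * c₂) * (y 1 : ℝ) := by
          simp only [hwdef, hu, hc] at h2
          nlinarith [h2]
        linarith
    refine ⟨fun y => decide (-(a₁ + ε * c₁) * (y 0 : ℝ) + -(a₂ + ε * c₂) * (y 1 : ℝ)
        ≤ -(a₀ + ε * t) - η),
      ⟨-(a₁ + ε * c₁), -(a₂ + ε * c₂), -(a₀ + ε * t) - η, fun y => by simp⟩, ?_, ?_⟩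
    · rw [hfx]
      have hPx : a₀ < w x := lt_of_not_ge hwx
      intro h
      rw [decide_eq_false_iff_not] at h
      exact h ((hgiff x).mpr hPx)
    · intro y hyx
      have h1 : a₀ < w y ↔ ¬ (u y ≤ a₀) := by
        rw [← not_le, hw y]
        constructor
        · intro h hcon; exact h ⟨hcon, hyx⟩
        · intro h hcon; exact h hcon.1
      have h2 : f y = false ↔ u y ≤ a₀ := by simp only [hu]; exact hsep y
      by_cases hcase : u y ≤ a₀
      · rw [h2.mpr hcase, decide_eq_false_iff_not]
        rw [hgiff y, h1]
        exact fun h => h hcase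
      · have hfy : f y = true := by
          cases hfy : f y
          · exact absurd (h2.mp hfy) hcase
          · rfl
        rw [hfy, decide_eq_true_eq, hgiff y, h1]
        exact hcase

/-- If `l` is an `i`-separation line of a planar threshold function `f`, then
every vertex of `Conv(l ∩ E_n²)` is an `i`-valued essential point of `f`. -/
theorem stmt18 (n : ℕ) (hn : 2 ≤ n) (f : (Fin 2 → Fin n) → Bool)
    (hf : f ∈ ThresholdClass n) (i : Bool) (a₁ a₂ a₀ : ℝ)
    (hline : ¬(a₁ = 0 ∧ a₂ = 0))
    (hsep : ∀ x, f x = i ↔ a₁ * (x 0 : ℝ) + a₂ * (x 1 : ℝ) ≤ a₀) :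
    ∀ x : Fin 2 → Fin n,
      toR x ∈ Set.extremePoints ℝ
        (convexHull ℝ (toR '' {y : Fin 2 → Fin n |
          a₁ * (y 0 : ℝ) + a₂ * (y 1 : ℝ) = a₀})) →
      Essential (ThresholdClass n) f x ∧ f x = i := by
  intro x hx_ext
  classical
  -- x lies on the line
  have hxS : toR x ∈ toR '' {y : Fin 2 → Fin n |
      a₁ * (y 0 : ℝ) + a₂ * (y 1 : ℝ) = a₀} :=
    extremePoints_convexHull_subset hx_ext
  obtain ⟨x', hx'S, hx'eq⟩ := hxS
  have hx : a₁ * (x 0 : ℝ) + a₂ * (x 1 : ℝ) = a₀ := by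
    have h := hx'S
    rw [toR_inj hx'eq] at h
    exact h
  have hfx : f x = i := (hsep x).mpr (le_of_eq hx)
  refine ⟨?_, hfx⟩
  obtain ⟨s, hs⟩ : ∃ s : (Fin 2 → Fin n) → ℝ,
      s = fun y => a₂ * (y 0 : ℝ) - a₁ * (y 1 : ℝ) := ⟨_, rfl⟩
  have hA : a₁ ^ 2 + a₂ ^ 2 ≠ 0 := by
    intro h0
    exact hline ⟨by nlinarith [sq_nonneg a₁, sq_nonneg a₂],
      by nlinarith [sq_nonneg a₁, sq_nonneg a₂]⟩
  -- coordinate formulas on the line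
  have hcoord0 : ∀ p : Fin 2 → Fin n, a₁ * (p 0 : ℝ) + a₂ * (p 1 : ℝ) = a₀ →
      (a₁ ^ 2 + a₂ ^ 2) * (p 0 : ℝ) = a₁ * a₀ + a₂ * s p := by
    intro p hp
    simp only [hs]
    linear_combination a₁ * hp
  have hcoord1 : ∀ p : Fin 2 → Fin n, a₁ * (p 0 : ℝ) + a₂ * (p 1 : ℝ) = a₀ →
      (a₁ ^ 2 + a₂ ^ 2) * (p 1 : ℝ) = a₂ * a₀ - a₁ * s p := by
    intro p hp
    simp only [hs]
    linear_combination a₂ * hp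
  -- injectivity of s on the line
  have hinj : ∀ y z : Fin 2 → Fin n, a₁ * (y 0 : ℝ) + a₂ * (y 1 : ℝ) = a₀ →
      a₁ * (z 0 : ℝ) + a₂ * (z 1 : ℝ) = a₀ → s y = s z → y = z := by
    intro y z hy hz hsyz
    have h0 : (y 0 : ℝ) = (z 0 : ℝ) := mul_left_cancel₀ hA
      (by rw [hcoord0 y hy, hcoord0 z hz, hsyz])
    have h1 : (y 1 : ℝ) = (z 1 : ℝ) := mul_left_cancel₀ hA
      (by rw [hcoord1 y hy, hcoord1 z hz, hsyz])
    have h0' : y 0 = z 0 := Fin.val_injective (by exact_mod_cast h0)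
    have h1' : y 1 = z 1 := Fin.val_injective (by exact_mod_cast h1)
    funext j
    fin_cases j
    · exact h0'
    · exact h1'
  -- dichotomy from extremeness
  have hdich : (∀ y : Fin 2 → Fin n, a₁ * (y 0 : ℝ) + a₂ * (y 1 : ℝ) = a₀ → y ≠ x → s y < s x) ∨
      (∀ y : Fin 2 → Fin n, a₁ * (y 0 : ℝ) + a₂ * (y 1 : ℝ) = a₀ → y ≠ x → s x < s y) := by
    by_contra h
    push_neg at h
    obtain ⟨⟨y, hy, hyx, hys⟩, ⟨z, hz, hzx, hzs⟩⟩ := h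
    have hsy : s x < s y := lt_of_le_of_ne hys (fun he => hyx (hinj y x hy hx he.symm))
    have hsz : s z < s x := lt_of_le_of_ne hzs (fun he => hzx (hinj z x hz hx he))
    have hD0 : (0:ℝ) < s y - s z := by linarith
    have hα0 : 0 < (s y - s x) / (s y - s z) := div_pos (by linarith) hD0
    have hβ0 : 0 < (s x - s z) / (s y - s z) := div_pos (by linarith) hD0
    have hαβ : (s y - s x) / (s y - s z) + (s x - s z) / (s y - s z) = 1 := by
      rw [← add_div, div_eq_one_iff_eq hD0.ne']
      ring
    have hsum : (s y - s x) / (s y - s z) * s z + (s x - s z) / (s y - s z) * s y = s x := by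
      rw [div_mul_eq_mul_div, div_mul_eq_mul_div, ← add_div, div_eq_iff hD0.ne']
      ring
    have hz0 := hcoord0 z hz
    have hy0 := hcoord0 y hy
    have hx0 := hcoord0 x hx
    have hz1 := hcoord1 z hz
    have hy1 := hcoord1 y hy
    have hx1 := hcoord1 x hx
    have e0 : (s y - s x) / (s y - s z) * (z 0 : ℝ) + (s x - s z) / (s y - s z) * (y 0 : ℝ)
        = (x 0 : ℝ) := mul_left_cancel₀ hA (by
      linear_combination ((s y - s x) / (s y - s z)) * hz0 + ((s x - s z) / (s y - s z)) * hy0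
        - hx0 + a₁ * a₀ * hαβ + a₂ * hsum)
    have e1 : (s y - s x) / (s y - s z) * (z 1 : ℝ) + (s x - s z) / (s y - s z) * (y 1 : ℝ)
        = (x 1 : ℝ) := mul_left_cancel₀ hA (by
      linear_combination ((s y - s x) / (s y - s z)) * hz1 + ((s x - s z) / (s y - s z)) * hy1
        - hx1 + a₂ * a₀ * hαβ - a₁ * hsum)
    have hcomb : ((s y - s x) / (s y - s z)) • toR z + ((s x - s z) / (s y - s z)) • toR y
        = toR x := by
      funext j
      simp only [Pi.add_apply, Pi.smul_apply, smul_eq_mul, toR]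
      fin_cases j
      · exact e0
      · exact e1
    have hzmem : toR z ∈ convexHull ℝ (toR '' {y : Fin 2 → Fin n |
        a₁ * (y 0 : ℝ) + a₂ * (y 1 : ℝ) = a₀}) :=
      subset_convexHull ℝ _ ⟨z, hz, rfl⟩
    have hymem : toR y ∈ convexHull ℝ (toR '' {y : Fin 2 → Fin n |
        a₁ * (y 0 : ℝ) + a₂ * (y 1 : ℝ) = a₀}) :=
      subset_convexHull ℝ _ ⟨y, hy, rfl⟩
    have hext := hx_ext.2 hzmem hymem
      ⟨(s y - s x) / (s y - s z), (s x - s z) / (s y - s z), hα0, hβ0, hαβ, hcomb⟩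
    exact hzx (toR_inj hext)
  rcases hdich with hd | hd
  · refine essential_aux n f i a₁ a₂ a₀ hsep x hx a₂ (-a₁) ?_
    intro y hy hyx
    have := hd y hy hyx
    simp only [hs] at this
    linarith
  · refine essential_aux n f i a₁ a₂ a₀ hsep x hx (-a₂) a₁ ?_
    intro y hy hyx
    have := hd y hy hyx
    simp only [hs] at this
    linarith
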